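/- arXiv:2009.01811 — 3 statements merged into one kernel-verified Lean document; each statement's English description precedes it below -/
import Mathlib

section
/- Let f: ℝ → ℝ be p times continuously differentiable near b, with f^{(p)} Lipschitz near b. If b is a local minimizer of f on [a,b] (right endpoint), and q ≤ p is the smallest odd index with f^{(q)}(b) ≠ 0 while all lower-order derivatives vanish, then f^{(q)}(b) < 0. -/
open Set Filter Topology

/-- On a uniquely-differentiable subset of an open set where `g` is `C^n`,
the iterated derivative within the subset equals the global iterated derivative. -/
lemma my_iteratedDerivWithin_eq_iteratedDeriv {g : ℝ → ℝ} {O : Set ℝ} (hO : IsOpen O)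
    {n : ℕ} {m : ℕ} (hg : ContDiffOn ℝ n g O) (hmn : m ≤ n) {s : Set ℝ}
    (hs : UniqueDiffOn ℝ s) (hsub : s ⊆ O) {y : ℝ} (hy : y ∈ s) :
    iteratedDerivWithin m g s y = iteratedDeriv m g y := by
  have h1 : HasFTaylorSeriesUpToOn n g (ftaylorSeriesWithin ℝ g O) s :=
    (hg.ftaylorSeriesWithin hO.uniqueDiffOn).mono hsub
  have h2 := h1.eq_iteratedFDerivWithin_of_uniqueDiffOn (m := m)
    (by exact_mod_cast hmn) hs hy
  have h3 : ftaylorSeriesWithin ℝ g O y m = iteratedFDerivWithin ℝ m g O y := rfl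
  have h4 : iteratedFDerivWithin ℝ m g O y = iteratedFDeriv ℝ m g y :=
    iteratedFDerivWithin_of_isOpen m hO (hsub hy)
  rw [iteratedDerivWithin_eq_iteratedFDerivWithin, iteratedDeriv_eq_iteratedFDeriv,
    ← h2, h3, h4]

theorem stmt_2 (f : ℝ → ℝ) (p q : ℕ) (a b : ℝ) (K : NNReal)
    (hreg : ∃ U ∈ nhds b, ContDiffOn ℝ p f U ∧
      LipschitzOnWith K (iteratedDeriv p f) U)
    (hab : a < b)
    (hmin : IsLocalMinOn f (Set.Icc a b) b)
    (hodd : Odd q) (hq1 : 1 ≤ q) (hqp : q ≤ p)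
    (hzero : ∀ j, 1 ≤ j → j < q → iteratedDeriv j f b = 0)
    (hne : iteratedDeriv q f b ≠ 0) :
    iteratedDeriv q f b < 0 := by
  by_contra hlt
  push_neg at hlt
  have hc : 0 < iteratedDeriv q f b := lt_of_le_of_ne hlt (Ne.symm hne)
  obtain ⟨U, hU, hcd, -⟩ := hreg
  set O := interior U with hOdef
  have hO : IsOpen O := isOpen_interior
  have hbO : b ∈ O := mem_interior_iff_mem_nhds.mpr hU
  have hfO : ContDiffOn ℝ p f O := hcd.mono interior_subset
  set g : ℝ → ℝ := fun t ↦ f (2 * b - t) with hgdef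
  -- iterated derivatives of g
  have hg : ∀ n t, iteratedDeriv n g t = (-1 : ℝ) ^ n * iteratedDeriv n f (2 * b - t) := by
    intro n t
    have h1 : g = fun z ↦ (fun y ↦ f (-y)) (z + -(2 * b)) := by
      funext z; simp only [hgdef]; ring_nf
    have h2 := congrFun (iteratedDeriv_comp_add_const n (fun y ↦ f (-y)) (-(2 * b))) t
    rw [h1, h2, iteratedDeriv_comp_neg]
    have h3 : -(t + -(2 * b)) = 2 * b - t := by ring
    rw [h3, smul_eq_mul]
  -- g is C^p on O'
  set O' : Set ℝ := (fun t ↦ 2 * b - t) ⁻¹' O with hO'def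
  have hO' : IsOpen O' := hO.preimage (by continuity)
  have hbO' : b ∈ O' := by
    simp only [hO'def, Set.mem_preimage]
    have : 2 * b - b = b := by ring
    rw [this]; exact hbO
  have hgO' : ContDiffOn ℝ p g O' :=
    hfO.comp ((contDiff_const.sub contDiff_id).contDiffOn) (fun x hx ↦ hx)
  -- iteratedDeriv q g is continuous on O' and negative at b
  have hcont : ContinuousOn (iteratedDeriv q g) O' := by
    have := hgO'.continuousOn_iteratedDerivWithin (m := q) (by exact_mod_cast hqp)
      hO'.uniqueDiffOn
    refine this.congr fun y hy ↦ ?_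
    exact (my_iteratedDerivWithin_eq_iteratedDeriv hO' hgO' hqp hO'.uniqueDiffOn
      (fun z hz ↦ hz) hy).symm
  have hgqb : iteratedDeriv q g b < 0 := by
    have h1 := hg q b
    have h2 : 2 * b - b = b := by ring
    rw [h2] at h1
    rw [h1, hodd.neg_one_pow]
    linarith
  have hmem : (iteratedDeriv q g) ⁻¹' (Iio 0) ∈ 𝓝 b :=
    (hcont.continuousAt (hO'.mem_nhds hbO')).preimage_mem_nhds (Iio_mem_nhds hgqb)
  -- neighborhood from the local min
  have hminV : {x | f b ≤ f x} ∈ 𝓝[Icc a b] b := hmin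
  obtain ⟨V, hV, hVmin⟩ := mem_nhdsWithin_iff_exists_mem_nhds_inter.mp hminV
  -- combine neighborhoods
  have hW : O' ∩ ((iteratedDeriv q g) ⁻¹' (Iio 0) ∩ V) ∈ 𝓝 b :=
    Filter.inter_mem (hO'.mem_nhds hbO') (Filter.inter_mem hmem hV)
  obtain ⟨δ, hδpos, hball⟩ := Metric.mem_nhds_iff.mp hW
  set η : ℝ := min (δ / 2) (b - a) with hηdef
  have hηpos : 0 < η := lt_min (by linarith) (by linarith)
  have hηδ : η < δ := lt_of_le_of_lt (min_le_left _ _) (by linarith)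
  have hηba : η ≤ b - a := min_le_right _ _
  set x : ℝ := b + η with hxdef
  have hbx : b < x := by simp [hxdef]; linarith
  have hIccball : Icc b x ⊆ Metric.ball b δ := by
    intro t ht
    rw [Metric.mem_ball, Real.dist_eq, abs_lt]
    obtain ⟨h1, h2⟩ := ht
    constructor <;> simp only [hxdef] at h2 <;> linarith
  have hIccO' : Icc b x ⊆ O' := fun t ht ↦ (hball (hIccball ht)).1
  -- Taylor expansion of g on [b, x]
  obtain ⟨n, rfl⟩ : ∃ n, q = n + 1 := ⟨q - 1, (Nat.succ_pred_eq_of_pos hq1).symm⟩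
  have hfIcc : ContDiffOn ℝ (n + 1) g (Icc b x) :=
    (hgO'.of_le (by exact_mod_cast hqp)).mono hIccO'
  have hf' : DifferentiableOn ℝ (iteratedDerivWithin n g (Icc b x)) (Ioo b x) :=
    (hfIcc.differentiableOn_iteratedDerivWithin (by exact_mod_cast Nat.lt_succ_self n)
      (uniqueDiffOn_Icc hbx)).mono Ioo_subset_Icc_self
  have hT := taylor_mean_remainder_lagrange (f := g) (n := n) hbx.ne
    (by rw [uIcc_of_le hbx.le]; exact hfIcc.of_le (by exact_mod_cast Nat.le_succ n))
    (by rw [uIcc_of_le hbx.le, uIoo_of_lt hbx]; exact hf')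
  rw [uIcc_of_le hbx.le, uIoo_of_lt hbx] at hT
  obtain ⟨x', hx', heq⟩ := hT
  -- the Taylor polynomial collapses to g b
  have hzg : ∀ j, 1 ≤ j → j ≤ n → iteratedDerivWithin j g (Icc b x) b = 0 := by
    intro j hj1 hjn
    rw [my_iteratedDerivWithin_eq_iteratedDeriv hO' hgO'
      (le_trans (le_trans hjn (Nat.le_succ n)) hqp) (uniqueDiffOn_Icc hbx) hIccO'
      (left_mem_Icc.mpr hbx.le), hg]
    have h2 : 2 * b - b = b := by ring
    rw [h2, hzero j hj1 (Nat.lt_succ_of_le hjn)]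
    ring
  have htay : ∀ m, m ≤ n → taylorWithinEval g m (Icc b x) b x = g b := by
    intro m hm
    induction m with
    | zero => simp
    | succ k ih =>
      rw [taylorWithinEval_succ, ih (le_trans (Nat.le_succ k) hm),
        hzg (k + 1) (Nat.one_le_iff_ne_zero.mpr (Nat.succ_ne_zero k)) hm]
      simp
  rw [htay n le_rfl] at heq
  -- the remainder term is negative
  have hx'O : x' ∈ O' := hIccO' (Ioo_subset_Icc_self hx')
  have hneg : iteratedDerivWithin (n + 1) g (Icc b x) x' < 0 := by
    rw [my_iteratedDerivWithin_eq_iteratedDeriv hO' hgO' hqp (uniqueDiffOn_Icc hbx)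
      hIccO' (Ioo_subset_Icc_self hx')]
    exact (hball (hIccball (Ioo_subset_Icc_self hx'))).2.1
  have hpow : 0 < (x - b) ^ (n + 1) := pow_pos (by linarith [hx'.1, hx'.2, hbx]) _
  have hfact : (0 : ℝ) < ((n + 1).factorial : ℝ) := by
    exact_mod_cast Nat.factorial_pos (n + 1)
  have hrem : g x - g b < 0 := by
    rw [heq]
    exact div_neg_of_neg_of_pos (mul_neg_of_neg_of_pos hneg hpow) hfact
  -- but g x ≥ g b from the local min
  have hgx : f b ≤ g x := by
    have h1 : 2 * b - x = b - η := by simp [hxdef]; ring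
    have h2 : b - η ∈ V := by
      have : b - η ∈ Metric.ball b δ := by
        rw [Metric.mem_ball, Real.dist_eq]
        rw [abs_lt]; constructor <;> linarith
      exact (hball this).2.2
    have h3 : b - η ∈ Icc a b := ⟨by linarith, by linarith⟩
    have := hVmin ⟨h2, h3⟩
    simpa [hgdef, h1] using this
  have hgb : g b = f b := by
    have : 2 * b - b = b := by ring
    simp [hgdef, this]
  rw [hgb] at hrem
  linarith
end

section
/- Let f: ℝ → ℝ be p times continuously differentiable with f^{(p)} Lipschitz near x*. If x* is an (unconstrained) local minimizer of f, then x* is a local minimizer of the Taylor polynomial T_p(x*, ·) of order p of f around x*. -/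
open Set Filter Topology
open scoped Nat

private lemma iteratedDerivWithin_of_mem_nhds' {n : ℕ} {f : ℝ → ℝ} {s : Set ℝ} {x : ℝ}
    (h : s ∈ 𝓝 x) : iteratedDerivWithin n f s x = iteratedDeriv n f x := by
  rw [← iteratedDerivWithin_univ, iteratedDerivWithin_eq_iteratedFDerivWithin,
    iteratedDerivWithin_eq_iteratedFDerivWithin, ← Set.univ_inter s,
    iteratedFDerivWithin_inter h]

private lemma abs_sub_le_of_mem_uIcc {xs x y : ℝ} (hy : y ∈ Set.uIcc xs x) :
    |x - y| ≤ |x - xs| ∧ |y - xs| ≤ |x - xs| := by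
  rcases Set.mem_uIcc.mp hy with ⟨h1, h2⟩ | ⟨h1, h2⟩
  · rw [abs_of_nonneg (by linarith), abs_of_nonneg (by linarith),
      abs_of_nonneg (by linarith)]
    constructor <;> linarith
  · rw [abs_of_nonpos (by linarith), abs_of_nonpos (by linarith),
      abs_of_nonpos (by linarith)]
    constructor <;> linarith

/-- Taylor remainder bound with Lipschitz top derivative. -/
private lemma remainder_bound (f : ℝ → ℝ) (m : ℕ) (xs ε : ℝ) (hε : 0 < ε) (K : NNReal)
    (hcd : ContDiffOn ℝ (m + 1) f (Set.Icc (xs - ε) (xs + ε)))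
    (hlip : LipschitzOnWith K (iteratedDeriv (m + 1) f) (Set.Icc (xs - ε) (xs + ε)))
    (x : ℝ) (hx : |x - xs| < ε) :
    |f x - taylorWithinEval f (m + 1) (Set.Icc (xs - ε) (xs + ε)) xs x|
      ≤ (m ! : ℝ)⁻¹ * K * |x - xs| ^ (m + 2) := by
  set a := xs - ε with ha
  set b := xs + ε with hb
  have hab : a < b := by simp only [ha, hb]; linarith
  set s : Set ℝ := Set.Icc a b with hs
  have hxs_mem : xs ∈ s := by constructor <;> simp only [ha, hb] <;> linarith
  have hx_abs := abs_lt.mp hx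
  have hx_mem : x ∈ s := by constructor <;> simp only [ha, hb] <;> linarith
  have huIcc : Set.uIcc xs x ⊆ s := by
    intro y hy
    rcases Set.mem_uIcc.mp hy with ⟨h1, h2⟩ | ⟨h1, h2⟩ <;>
      constructor <;> simp only [ha, hb] <;> linarith
  have hint : ∀ y ∈ Set.uIcc xs x, s ∈ 𝓝 y := by
    intro y hy
    obtain ⟨h1, h2⟩ := abs_sub_le_of_mem_uIcc hy
    have : |y - xs| < ε := lt_of_le_of_lt h2 hx
    have := abs_lt.mp this
    exact Icc_mem_nhds (by simp only [ha]; linarith) (by simp only [hb]; linarith)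
  set c : ℝ := (((m + 1) ! : ℝ))⁻¹ * iteratedDeriv (m + 1) f xs with hc
  set Phi : ℝ → ℝ := fun y => taylorWithinEval f m s y x + (x - y) ^ (m + 1) * c with hPhi
  set D : ℝ → ℝ := fun y =>
    (m ! : ℝ)⁻¹ * (x - y) ^ m * (iteratedDeriv (m + 1) f y - iteratedDeriv (m + 1) f xs)
    with hD
  have hf_m : ContDiffOn ℝ m f s := hcd.of_le (by exact_mod_cast Nat.le_succ m)
  have hf' : DifferentiableOn ℝ (iteratedDerivWithin m f s) s :=
    hcd.differentiableOn_iteratedDerivWithin (by exact_mod_cast Nat.lt_succ_self m)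
      (uniqueDiffOn_Icc hab)
  have hderiv : ∀ y ∈ Set.uIcc xs x, HasDerivWithinAt Phi (D y) (Set.uIcc xs x) y := by
    intro y hy
    have h1 := (hasDerivWithinAt_taylorWithinEval_at_Icc x hab (huIcc hy) hf_m hf').mono huIcc
    have h2 : HasDerivWithinAt (fun z : ℝ => (x - z) ^ (m + 1) * c)
        ((-(m + 1) * (x - y) ^ m) * c) (Set.uIcc xs x) y :=
      ((monomial_has_deriv_aux y x m).mul_const c).hasDerivWithinAt
    have h3 := h1.add h2
    have hrw : iteratedDerivWithin (m + 1) f s y = iteratedDeriv (m + 1) f y :=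
      iteratedDerivWithin_of_mem_nhds' (hint y hy)
    refine h3.congr_deriv ?_
    rw [hrw] at *
    simp only [hD, hc, smul_eq_mul]
    have hm : (m ! : ℝ) ≠ 0 := by positivity
    have hm1 : (((m + 1) ! : ℕ) : ℝ) = (m + 1 : ℝ) * (m ! : ℝ) := by
      rw [Nat.factorial_succ]; push_cast; ring
    rw [hm1]
    field_simp
    ring
  have hbound : ∀ y ∈ Set.uIcc xs x,
      ‖D y‖ ≤ (m ! : ℝ)⁻¹ * |x - xs| ^ m * (K * |x - xs|) := by
    intro y hy
    obtain ⟨h1, h2⟩ := abs_sub_le_of_mem_uIcc hy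
    have hlipy : |iteratedDeriv (m + 1) f y - iteratedDeriv (m + 1) f xs| ≤ K * |y - xs| := by
      have := hlip.dist_le_mul y (huIcc hy) xs hxs_mem
      rwa [Real.dist_eq, Real.dist_eq] at this
    have : ‖D y‖ = (m ! : ℝ)⁻¹ * |x - y| ^ m *
        |iteratedDeriv (m + 1) f y - iteratedDeriv (m + 1) f xs| := by
      simp only [hD, Real.norm_eq_abs, abs_mul, abs_pow, abs_inv, Nat.abs_cast]
    rw [this]
    have hK : (0:ℝ) ≤ K := K.coe_nonneg
    have hA : |x - y| ^ m ≤ |x - xs| ^ m := pow_le_pow_left₀ (abs_nonneg _) h1 m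
    have hB : |iteratedDeriv (m + 1) f y - iteratedDeriv (m + 1) f xs| ≤ K * |x - xs| :=
      hlipy.trans (mul_le_mul_of_nonneg_left h2 hK)
    exact mul_le_mul (mul_le_mul le_rfl hA (by positivity) (by positivity)) hB
      (abs_nonneg _) (by positivity)
  have hmvt := Convex.norm_image_sub_le_of_norm_hasDerivWithin_le hderiv hbound
    (convex_uIcc xs x) Set.left_mem_uIcc Set.right_mem_uIcc
  have hPhix : Phi x = f x := by
    simp only [hPhi, taylorWithinEval_self, sub_self, zero_pow (Nat.succ_ne_zero m), zero_mul,
      add_zero]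
  have hPhixs : Phi xs = taylorWithinEval f (m + 1) s xs x := by
    rw [taylorWithinEval_succ, hPhi]
    simp only [smul_eq_mul]
    rw [iteratedDerivWithin_of_mem_nhds' (hint xs Set.left_mem_uIcc)]
    have hm1 : (((m + 1) ! : ℕ) : ℝ) = ((m : ℝ) + 1) * (m ! : ℝ) := by
      rw [Nat.factorial_succ]; push_cast; ring
    simp only [hc, hm1]
    ring
  rw [hPhix, hPhixs] at hmvt
  calc |f x - taylorWithinEval f (m + 1) s xs x|
      ≤ (m ! : ℝ)⁻¹ * |x - xs| ^ m * (K * |x - xs|) * ‖x - xs‖ := hmvt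
    _ = (m ! : ℝ)⁻¹ * K * |x - xs| ^ (m + 2) := by
        rw [Real.norm_eq_abs]; ring

/-- Polynomial positivity from one-sided remainder bound. -/
private lemma poly_nonneg (p : ℕ) (a : ℕ → ℝ) (C : ℝ)
    (h : ∀ᶠ t in 𝓝 (0:ℝ), -C * |t| ^ (p + 1) ≤ ∑ j ∈ Finset.Icc 1 p, a j * t ^ j) :
    ∀ᶠ t in 𝓝 (0:ℝ), 0 ≤ ∑ j ∈ Finset.Icc 1 p, a j * t ^ j := by
  by_cases hz : ∀ j ∈ Finset.Icc 1 p, a j = 0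
  · filter_upwards with t
    rw [Finset.sum_eq_zero fun j hj => by rw [hz j hj, zero_mul]]
  · push_neg at hz
    have hex : ∃ k, k ∈ Finset.Icc 1 p ∧ a k ≠ 0 := by
      obtain ⟨j, hj1, hj2⟩ := hz; exact ⟨j, hj1, hj2⟩
    classical
    set k := Nat.find hex with hk
    obtain ⟨hk_mem, hk_ne⟩ := Nat.find_spec hex
    have hk1 : 1 ≤ k := (Finset.mem_Icc.mp hk_mem).1
    have hkp : k ≤ p := (Finset.mem_Icc.mp hk_mem).2
    have hlow : ∀ j, j ∈ Finset.Icc 1 p → j < k → a j = 0 := by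
      intro j hj hjk
      by_contra hne
      exact Nat.find_min hex hjk ⟨hj, hne⟩
    set R : ℝ → ℝ := fun t => ∑ j ∈ Finset.Icc k p, a j * t ^ (j - k) with hR
    have hQR : ∀ t : ℝ, (∑ j ∈ Finset.Icc 1 p, a j * t ^ j) = t ^ k * R t := by
      intro t
      have hsub : Finset.Icc k p ⊆ Finset.Icc 1 p := by
        intro j hj; rw [Finset.mem_Icc] at *; omega
      rw [← Finset.sum_subset hsub (fun j hj hj' => by
        rw [hlow j hj (by rw [Finset.mem_Icc] at *; omega), zero_mul])]
      rw [hR, Finset.mul_sum]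
      apply Finset.sum_congr rfl
      intro j hj
      rw [Finset.mem_Icc] at hj
      rw [← mul_assoc, mul_comm (t ^ k), mul_assoc, ← pow_add]
      congr 2
      omega
    have hRcont : Continuous R := by
      apply continuous_finset_sum
      intro j _
      exact (continuous_const.mul (continuous_pow _))
    have hR0 : R 0 = a k := by
      simp only [hR]
      rw [Finset.sum_eq_single_of_mem k (Finset.mem_Icc.mpr ⟨le_refl k, hkp⟩)]
      · simp
      · intro j hj hjk
        rw [Finset.mem_Icc] at hj
        rw [zero_pow (by omega), mul_zero]
    -- a k > 0
    have hak_pos : 0 < a k := by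
      rcases hk_ne.lt_or_gt with hneg | hpos
      · exfalso
        -- use right limit
        have t1 : Tendsto R (𝓝[>] (0:ℝ)) (𝓝 (a k)) := by
          rw [← hR0]
          exact (hRcont.tendsto 0).mono_left nhdsWithin_le_nhds
        have t2 : Tendsto (fun t : ℝ => -C * t ^ (p + 1 - k)) (𝓝[>] (0:ℝ)) (𝓝 0) := by
          have : Tendsto (fun t : ℝ => -C * t ^ (p + 1 - k)) (𝓝 (0:ℝ))
              (𝓝 (-C * 0 ^ (p + 1 - k))) :=
            (continuous_const.mul (continuous_pow _)).tendsto 0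
          rw [zero_pow (by omega), mul_zero] at this
          exact this.mono_left nhdsWithin_le_nhds
        have ev : ∀ᶠ t in 𝓝[>] (0:ℝ), -C * t ^ (p + 1 - k) ≤ R t := by
          filter_upwards [eventually_nhdsWithin_of_eventually_nhds h,
            self_mem_nhdsWithin] with t ht ht'
          rw [Set.mem_Ioi] at ht'
          rw [hQR t, abs_of_pos ht'] at ht
          have hk0 : (0:ℝ) < t ^ k := pow_pos ht' k
          have heq : t ^ (p + 1) = t ^ (p + 1 - k) * t ^ k := by
            rw [← pow_add]; congr 1; omega
          rw [heq] at ht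
          have : -C * t ^ (p + 1 - k) * t ^ k ≤ R t * t ^ k := by
            calc -C * t ^ (p + 1 - k) * t ^ k = -C * (t ^ (p + 1 - k) * t ^ k) := by ring
              _ ≤ t ^ k * R t := ht
              _ = R t * t ^ k := by ring
          exact le_of_mul_le_mul_right this hk0
        have : a k ≥ 0 := le_of_tendsto_of_tendsto t2 t1 ev
        linarith
      · exact hpos
    -- k even
    have hk_even : Even k := by
      by_contra hodd
      rw [Nat.not_even_iff_odd] at hodd
      have t1 : Tendsto R (𝓝[<] (0:ℝ)) (𝓝 (a k)) := by
        rw [← hR0]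
        exact (hRcont.tendsto 0).mono_left nhdsWithin_le_nhds
      have t2 : Tendsto (fun t : ℝ => C * |t| ^ (p + 1 - k)) (𝓝[<] (0:ℝ)) (𝓝 0) := by
        have : Tendsto (fun t : ℝ => C * |t| ^ (p + 1 - k)) (𝓝 (0:ℝ))
            (𝓝 (C * |(0:ℝ)| ^ (p + 1 - k))) :=
          (continuous_const.mul (continuous_abs.pow _)).tendsto 0
        rw [abs_zero, zero_pow (by omega), mul_zero] at this
        exact this.mono_left nhdsWithin_le_nhds
      have ev : ∀ᶠ t in 𝓝[<] (0:ℝ), R t ≤ C * |t| ^ (p + 1 - k) := by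
        filter_upwards [eventually_nhdsWithin_of_eventually_nhds h,
          self_mem_nhdsWithin] with t ht ht'
        rw [Set.mem_Iio] at ht'
        rw [hQR t] at ht
        have habs : (0:ℝ) < |t| := abs_pos.mpr (ne_of_lt ht')
        have htk : t ^ k = -|t| ^ k := by
          rw [abs_of_neg ht', Odd.neg_pow hodd, neg_neg]
        have hpow : |t| ^ (p + 1) = |t| ^ (p + 1 - k) * |t| ^ k := by
          rw [← pow_add]; congr 1; omega
        rw [htk, hpow] at ht
        have hk0 : (0:ℝ) < |t| ^ k := pow_pos habs k
        have : R t * |t| ^ k ≤ C * |t| ^ (p + 1 - k) * |t| ^ k := by nlinarith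
        exact le_of_mul_le_mul_right this hk0
      have : a k ≤ 0 := le_of_tendsto_of_tendsto t1 t2 ev
      linarith
    -- conclude
    have hev : ∀ᶠ t in 𝓝 (0:ℝ), 0 < R t := by
      have : (0:ℝ) < R 0 := by rw [hR0]; exact hak_pos
      exact (hRcont.tendsto 0).eventually (eventually_gt_nhds this)
    filter_upwards [hev] with t ht
    rw [hQR t]
    exact mul_nonneg (hk_even.pow_nonneg t) ht.le

theorem stmt_3 (f : ℝ → ℝ) (p : ℕ) (xs : ℝ) (K : NNReal)
    (hreg : ∃ U ∈ nhds xs, ContDiffOn ℝ p f U ∧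
      LipschitzOnWith K (iteratedDeriv p f) U)
    (hmin : IsLocalMin f xs) :
    IsLocalMin (fun x : ℝ =>
      ∑ j ∈ Finset.range (p + 1),
        iteratedDeriv j f xs / (Nat.factorial j) * (x - xs) ^ j) xs := by
  rcases p with _ | m
  · simpa using (isLocalMin_const : IsLocalMin (fun _ : ℝ => f xs) xs)
  obtain ⟨U, hU, hcd, hlip⟩ := hreg
  set a : ℕ → ℝ := fun j => iteratedDeriv j f xs / (Nat.factorial j : ℝ) with ha
  set T : ℝ → ℝ := fun x : ℝ =>
      ∑ j ∈ Finset.range (m + 1 + 1),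
        iteratedDeriv j f xs / (Nat.factorial j) * (x - xs) ^ j with hT
  -- shrink to a closed interval
  obtain ⟨ε', hε', hball⟩ := Metric.mem_nhds_iff.mp (Filter.inter_mem hU hmin)
  set ε := ε' / 2 with hε_def
  have hε : 0 < ε := by positivity
  have hIcc : Set.Icc (xs - ε) (xs + ε) ⊆ U ∩ {x | f xs ≤ f x} := by
    intro y hy
    apply hball
    rw [Metric.mem_ball, Real.dist_eq]
    obtain ⟨h1, h2⟩ := hy
    rw [abs_lt]
    constructor <;> simp only [hε_def] at * <;> linarith
  have hIccU : Set.Icc (xs - ε) (xs + ε) ⊆ U := fun y hy => (hIcc hy).1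
  have hcd' : ContDiffOn ℝ (m + 1) f (Set.Icc (xs - ε) (xs + ε)) := hcd.mono hIccU
  have hlip' : LipschitzOnWith K (iteratedDeriv (m + 1) f) (Set.Icc (xs - ε) (xs + ε)) :=
    hlip.mono hIccU
  have hTxs : T xs = f xs := by
    simp only [hT]
    rw [Finset.sum_eq_single_of_mem 0 (Finset.mem_range.mpr (Nat.succ_pos _))]
    · simp
    · intro j _ hj
      rw [sub_self, zero_pow hj, mul_zero]
  -- T equals the taylorWithinEval
  have hTeq : ∀ x, T x = taylorWithinEval f (m + 1) (Set.Icc (xs - ε) (xs + ε)) xs x := by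
    intro x
    simp only [hT]
    rw [taylor_within_apply]
    apply Finset.sum_congr rfl
    intro j _
    rw [iteratedDerivWithin_of_mem_nhds'
      (Icc_mem_nhds (by linarith) (by linarith))]
    simp only [smul_eq_mul]
    ring
  -- the shifted polynomial identity
  have hsum : ∀ t : ℝ, T (xs + t) =
      f xs + ∑ j ∈ Finset.Icc 1 (m + 1), a j * t ^ j := by
    intro t
    simp only [hT]
    have hins : Finset.range (m + 1 + 1) = insert 0 (Finset.Icc 1 (m + 1)) := by
      ext j
      simp only [Finset.mem_range, Finset.mem_insert, Finset.mem_Icc]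
      omega
    rw [hins, Finset.sum_insert (by simp)]
    have h0 : iteratedDeriv 0 f xs / (Nat.factorial 0 : ℝ) * (xs + t - xs) ^ 0 = f xs := by
      simp
    rw [h0]
    congr 1
    apply Finset.sum_congr rfl
    intro j _
    have : xs + t - xs = t := by ring
    rw [this, ha]
  -- key eventual bound
  set C : ℝ := (m ! : ℝ)⁻¹ * K with hC
  have E1 : ∀ᶠ x in 𝓝 xs, -C * |x - xs| ^ (m + 2) ≤ T x - T xs := by
    filter_upwards [Metric.ball_mem_nhds xs hε] with x hx
    rw [Metric.mem_ball, Real.dist_eq] at hx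
    have hrem := remainder_bound f m xs ε hε K hcd' hlip' x hx
    rw [← hTeq x] at hrem
    have hxmem : x ∈ Set.Icc (xs - ε) (xs + ε) := by
      have := abs_lt.mp hx
      constructor <;> linarith
    have hfmin : f xs ≤ f x := (hIcc hxmem).2
    have h1 : f x - T x ≤ C * |x - xs| ^ (m + 2) := by
      have := le_abs_self (f x - T x)
      rw [hC]; linarith
    rw [hTxs]
    linarith
  have E2 : ∀ᶠ t in 𝓝 (0 : ℝ), -C * |t| ^ (m + 1 + 1) ≤
      ∑ j ∈ Finset.Icc 1 (m + 1), a j * t ^ j := by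
    have hmap : Filter.Tendsto (fun t : ℝ => xs + t) (𝓝 0) (𝓝 xs) := by
      simpa using (continuous_add_left xs).tendsto (0 : ℝ)
    filter_upwards [hmap.eventually E1] with t ht
    have hsimp : xs + t - xs = t := by ring
    rw [hsimp] at ht
    rw [hsum t, hTxs] at ht
    calc -C * |t| ^ (m + 1 + 1) = -C * |t| ^ (m + 2) := by norm_num
      _ ≤ f xs + (∑ j ∈ Finset.Icc 1 (m + 1), a j * t ^ j) - f xs := ht
      _ = ∑ j ∈ Finset.Icc 1 (m + 1), a j * t ^ j := by ring
  have E3 := poly_nonneg (m + 1) a C E2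
  have hmap2 : Filter.Tendsto (fun x : ℝ => x - xs) (𝓝 xs) (𝓝 0) := by
    simpa using (continuous_sub_right xs).tendsto xs
  show ∀ᶠ x in 𝓝 xs, T xs ≤ T x
  filter_upwards [hmap2.eventually E3] with x hx
  have hx' : T x = f xs + ∑ j ∈ Finset.Icc 1 (m + 1), a j * (x - xs) ^ j := by
    have := hsum (x - xs)
    rw [show xs + (x - xs) = x by ring] at this
    exact this
  rw [hTxs, hx']
  linarith
end

section
/- If σ ≥ 1/4, then the origin is a local minimizer of the function (x₁,x₂) ↦ x₂² − x₁²x₂ + σ(x₁² + x₂²)², but if 0 < σ < 1/4 the origin is not a local minimizer of this function. -/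
theorem stmt_8 (σ : ℝ) :
    (σ ≥ 1/4 →
      IsLocalMin (fun x : ℝ × ℝ =>
        x.2^2 - x.1^2 * x.2 + σ * (x.1^2 + x.2^2)^2) (0, 0)) ∧
    (0 < σ → σ < 1/4 →
      ¬ IsLocalMin (fun x : ℝ × ℝ =>
        x.2^2 - x.1^2 * x.2 + σ * (x.1^2 + x.2^2)^2) (0, 0)) := by
  constructor
  · intro hσ
    refine Filter.Eventually.of_forall fun x => ?_
    simp only
    have h1 : (0:ℝ) ≤ x.2^2 - x.1^2 * x.2 + σ * (x.1^2 + x.2^2)^2 := by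
      nlinarith [sq_nonneg (x.2 - x.1^2/2), sq_nonneg x.1, sq_nonneg x.2,
        sq_nonneg (x.1*x.2), sq_nonneg (x.1^2+x.2^2), sq_nonneg (x.1^2-x.2^2)]
    norm_num
    linarith
  · intro hσ0 hσ h
    rw [IsLocalMin, IsMinFilter, Metric.eventually_nhds_iff] at h
    obtain ⟨ε, hε, H⟩ := h
    set m : ℝ := min 1 ((1/4 - σ)/σ) with hm
    have hm0 : 0 < m := lt_min one_pos (div_pos (by linarith) hσ0)
    set t : ℝ := min (ε/2) (Real.sqrt m / 2) with ht
    have ht0 : 0 < t := lt_min (by linarith) (by positivity)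
    have ht2 : t^2 ≤ m/4 := by
      have h1 : t ≤ Real.sqrt m / 2 := min_le_right _ _
      have h2 : (Real.sqrt m / 2)^2 = m/4 := by
        rw [div_pow, Real.sq_sqrt hm0.le]; norm_num
      nlinarith
    have htm1 : t^2 ≤ 1 := by
      have : m ≤ 1 := min_le_left _ _
      linarith
    have ht1 : t ≤ 1 := by nlinarith
    have hσt : σ * t^2 ≤ (1/4 - σ)/4 := by
      have hmle : m * σ ≤ 1/4 - σ := (le_div_iff₀ hσ0).mp (min_le_right _ _)
      nlinarith
    have hdist : dist ((t, t^2/2) : ℝ × ℝ) (0, 0) < ε := by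
      rw [Prod.dist_eq]
      have d1 : dist t (0:ℝ) = t := by
        rw [Real.dist_eq, sub_zero, abs_of_pos ht0]
      have d2 : dist (t^2/2) (0:ℝ) = t^2/2 := by
        rw [Real.dist_eq, sub_zero, abs_of_pos (by positivity)]
      simp only [d1, d2]
      have hte : t ≤ ε/2 := min_le_left _ _
      apply max_lt <;> nlinarith
    have := H hdist
    simp only at this
    norm_num at this
    nlinarith [pow_pos ht0 4, pow_pos ht0 6, sq_nonneg t, mul_pos (pow_pos ht0 4) hσ0]
end
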